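/- arXiv:quant-ph/0110125 — 4 statements merged into one kernel-verified Lean document; each statement's English description precedes it below -/
import Mathlib

section
/- (Key operator inequality.) ρ_n ≤ v(σ_n) · E_{σ_n}(ρ_n) in the Loewner order, where v(σ_n) is the number of distinct eigenvalues of σ_n and E_{σ_n}(ρ_n) is the pinching of ρ_n by σ_n. -/
open Matrix Filter
open scoped ComplexOrder

noncomputable section

/-- Functional calculus for a Hermitian matrix: apply `f` to the eigenvalues. -/
def matFun {m : Type*} [Fintype m] [DecidableEq m] (f : ℝ → ℝ) (A : Matrix m m ℂ) :
    Matrix m m ℂ :=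
  if hA : A.IsHermitian then
    (hA.eigenvectorUnitary : Matrix m m ℂ) *
      Matrix.diagonal (fun i => (f (hA.eigenvalues i) : ℂ)) *
      star (hA.eigenvectorUnitary : Matrix m m ℂ)
  else 0

/-- Matrix logarithm (via functional calculus). -/
def matLog {m : Type*} [Fintype m] [DecidableEq m] (A : Matrix m m ℂ) : Matrix m m ℂ :=
  matFun Real.log A

/-- Real matrix power (via functional calculus). -/
def matRPow {m : Type*} [Fintype m] [DecidableEq m] (A : Matrix m m ℂ) (s : ℝ) :
    Matrix m m ℂ :=
  matFun (fun x => x ^ s) A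

open Classical in
/-- The finite set of (distinct, real) eigenvalues of a Hermitian matrix. -/
def eigFinset {m : Type*} [Fintype m] [DecidableEq m] (A : Matrix m m ℂ) : Finset ℝ :=
  if hA : A.IsHermitian then Finset.image hA.eigenvalues Finset.univ else ∅

/-- `v A`: the number of distinct eigenvalues of a Hermitian matrix `A`. -/
def numEig {m : Type*} [Fintype m] [DecidableEq m] (A : Matrix m m ℂ) : ℕ :=
  (eigFinset A).card

/-- The spectral projection of a Hermitian matrix `A` corresponding to eigenvalue `μ`. -/
def specProj {m : Type*} [Fintype m] [DecidableEq m] (A : Matrix m m ℂ) (μ : ℝ) :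
    Matrix m m ℂ :=
  matFun (fun x => if x = μ then 1 else 0) A

/-- The pinching `E_A(B) = Σ_i E_i B E_i` of `B` by the Hermitian matrix `A`. -/
def pinch {m : Type*} [Fintype m] [DecidableEq m] (A B : Matrix m m ℂ) : Matrix m m ℂ :=
  ∑ μ ∈ eigFinset A, specProj A μ * B * specProj A μ

/-- `{X > 0}`: the projection onto the strictly positive eigenspaces of a Hermitian `X`. -/
def posProj {m : Type*} [Fintype m] [DecidableEq m] (X : Matrix m m ℂ) : Matrix m m ℂ :=
  matFun (fun x => if 0 < x then 1 else 0) X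

/-- The `n`-fold tensor (Kronecker) power of a `d × d` matrix, realized on the index type
`Fin n → Fin d`. -/
def tensorPow {d : ℕ} (ρ : Matrix (Fin d) (Fin d) ℂ) (n : ℕ) :
    Matrix (Fin n → Fin d) (Fin n → Fin d) ℂ :=
  fun x y => ∏ i, ρ (x i) (y i)

/-- A density matrix: positive semidefinite with unit trace. -/
def IsDensity {m : Type*} [Fintype m] [DecidableEq m] (ρ : Matrix m m ℂ) : Prop :=
  ρ.PosSemidef ∧ ρ.trace = 1

/-- A test: an operator `A` with `0 ≤ A ≤ I` in the Loewner order. -/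
def IsTest {m : Type*} [Fintype m] [DecidableEq m] (A : Matrix m m ℂ) : Prop :=
  A.PosSemidef ∧ (1 - A).PosSemidef

/-- The quantum relative entropy `D(ρ‖σ) = Tr[ρ (log ρ − log σ)]`. -/
def relEnt {m : Type*} [Fintype m] [DecidableEq m] (ρ σ : Matrix m m ℂ) : ℝ :=
  ((ρ * (matLog ρ - matLog σ)).trace).re

/-- The error probability of the first kind, `α_n(A) = Tr[ρ_n (I − A)]`. -/
def alphaErr {d : ℕ} (ρ : Matrix (Fin d) (Fin d) ℂ) (n : ℕ)
    (A : Matrix (Fin n → Fin d) (Fin n → Fin d) ℂ) : ℝ :=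
  ((tensorPow ρ n * (1 - A)).trace).re

/-- The error probability of the second kind, `β_n(A) = Tr[σ_n A]`. -/
def betaErr {d : ℕ} (σ : Matrix (Fin d) (Fin d) ℂ) (n : ℕ)
    (A : Matrix (Fin n → Fin d) (Fin n → Fin d) ℂ) : ℝ :=
  ((tensorPow σ n * A).trace).re

/-- `β*_n(ε)`: the minimum type-II error among tests with type-I error at most `ε`. -/
def betaStar {d : ℕ} (ρ σ : Matrix (Fin d) (Fin d) ℂ) (n : ℕ) (ε : ℝ) : ℝ :=
  sInf {b : ℝ | ∃ A : Matrix (Fin n → Fin d) (Fin n → Fin d) ℂ,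
    IsTest A ∧ alphaErr ρ n A ≤ ε ∧ b = betaErr σ n A}


section Aux

lemma psd_sum_aux {m ι : Type*} [Fintype m] [DecidableEq m] (s : Finset ι)
    (f : ι → Matrix m m ℂ) (h : ∀ i ∈ s, (f i).PosSemidef) :
    (∑ i ∈ s, f i).PosSemidef :=
  Finset.sum_induction f _ (fun _ _ ha hb => ha.add hb) Matrix.PosSemidef.zero h

lemma psd_real_smul_aux {m : Type*} [Fintype m] [DecidableEq m] {c : ℝ} (hc : 0 ≤ c)
    {M : Matrix m m ℂ} (h : M.PosSemidef) : ((c : ℂ) • M).PosSemidef := by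
  constructor
  · unfold Matrix.IsHermitian
    rw [conjTranspose_smul, h.1.eq]
    congr 1
    simp [Complex.conj_ofReal]
  · exact (h.smul (Complex.zero_le_real.mpr hc)).2

lemma key_psd_aux {m ι : Type*} [Fintype m] [DecidableEq m] (s : Finset ι)
    (P : ι → Matrix m m ℂ) (C : Matrix m m ℂ)
    (hP : ∀ μ ∈ s, (P μ)ᴴ = P μ) (hsum : ∑ μ ∈ s, P μ = 1) :
    ((s.card : ℂ) • (∑ μ ∈ s, P μ * (Cᴴ * C) * P μ) - Cᴴ * C).PosSemidef := by
  set Q : ι → Matrix m m ℂ := fun μ => C * P μ with hQ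
  have hQsum : ∑ μ ∈ s, Q μ = C := by
    simp only [hQ, ← Finset.mul_sum, hsum, mul_one]
  have hQH : ∀ μ ∈ s, (Q μ)ᴴ = P μ * Cᴴ := by
    intro μ hμ; rw [hQ, conjTranspose_mul, hP μ hμ]
  have hQHsum : ∑ μ ∈ s, (Q μ)ᴴ = Cᴴ := by
    rw [Finset.sum_congr rfl hQH, ← Finset.sum_mul, hsum, one_mul]
  have hT : ∑ μ ∈ s, (Q μ)ᴴ * Q μ = ∑ μ ∈ s, P μ * (Cᴴ * C) * P μ := by
    refine Finset.sum_congr rfl fun μ hμ => ?_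
    rw [hQH μ hμ, hQ]; simp only [mul_assoc]
  have hS : ∑ μ ∈ s, ∑ ν ∈ s, ((Q μ - Q ν)ᴴ * (Q μ - Q ν))
      = (2 : ℂ) • ((s.card : ℂ) • (∑ μ ∈ s, P μ * (Cᴴ * C) * P μ) - Cᴴ * C) := by
    have expand : ∀ μ ∈ s, ∑ ν ∈ s, ((Q μ - Q ν)ᴴ * (Q μ - Q ν))
        = ∑ ν ∈ s, ((Q μ)ᴴ * Q μ + (Q ν)ᴴ * Q ν - ((Q μ)ᴴ * Q ν + (Q ν)ᴴ * Q μ)) := by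
      intro μ _; refine Finset.sum_congr rfl fun ν _ => ?_
      rw [conjTranspose_sub]; noncomm_ring
    rw [Finset.sum_congr rfl expand]
    have h1 : ∑ μ ∈ s, ∑ ν ∈ s, (Q μ)ᴴ * Q ν = Cᴴ * C := by
      rw [← Finset.sum_mul_sum, hQHsum, hQsum]
    have h2 : ∑ μ ∈ s, ∑ ν ∈ s, (Q ν)ᴴ * Q μ = Cᴴ * C := by
      rw [Finset.sum_comm, ← Finset.sum_mul_sum, hQHsum, hQsum]
    simp only [Finset.sum_sub_distrib, Finset.sum_add_distrib, Finset.sum_const, h1, h2]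
    rw [← Finset.smul_sum, hT, two_smul, Nat.cast_smul_eq_nsmul]
    abel
  have hSpsd : (∑ μ ∈ s, ∑ ν ∈ s, ((Q μ - Q ν)ᴴ * (Q μ - Q ν))).PosSemidef := by
    refine psd_sum_aux _ _ fun μ _ => psd_sum_aux _ _ fun ν _ => ?_
    exact Matrix.posSemidef_conjTranspose_mul_self _
  rw [hS] at hSpsd
  have := psd_real_smul_aux (c := (1:ℝ)/2) (by norm_num) hSpsd
  rw [smul_smul] at this
  norm_num at this
  convert this using 2

lemma tensorPow_mul_aux {d : ℕ} (a b : Matrix (Fin d) (Fin d) ℂ) (n : ℕ) :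
    tensorPow (a * b) n = tensorPow a n * tensorPow b n := by
  ext x y
  rw [Matrix.mul_apply]
  simp only [tensorPow, Matrix.mul_apply]
  rw [Finset.prod_univ_sum]
  rw [Fintype.piFinset_univ]
  exact Finset.sum_congr rfl fun z _ => Finset.prod_mul_distrib

lemma tensorPow_conjTranspose_aux {d : ℕ} (a : Matrix (Fin d) (Fin d) ℂ) (n : ℕ) :
    (tensorPow a n)ᴴ = tensorPow aᴴ n := by
  ext x y
  simp [tensorPow, conjTranspose_apply, map_prod]

lemma specProj_herm_aux {m : Type*} [Fintype m] [DecidableEq m] {A : Matrix m m ℂ}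
    (hA : A.IsHermitian) (μ : ℝ) : (specProj A μ)ᴴ = specProj A μ := by
  rw [specProj, matFun, dif_pos hA]
  have hD : (Matrix.diagonal fun i => ((if hA.eigenvalues i = μ then 1 else 0 : ℝ) : ℂ))ᴴ
      = Matrix.diagonal fun i => ((if hA.eigenvalues i = μ then 1 else 0 : ℝ) : ℂ) := by
    rw [diagonal_conjTranspose]
    have hst : (star fun i => ((if hA.eigenvalues i = μ then 1 else 0 : ℝ) : ℂ))
        = fun i => ((if hA.eigenvalues i = μ then 1 else 0 : ℝ) : ℂ) := by
      funext i
      rw [Pi.star_apply]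
      exact Complex.conj_ofReal _
    rw [hst]
  simp only [conjTranspose_mul, hD, Matrix.star_eq_conjTranspose, conjTranspose_conjTranspose,
    mul_assoc]

lemma specProj_sum_aux {m : Type*} [Fintype m] [DecidableEq m] {A : Matrix m m ℂ}
    (hA : A.IsHermitian) : ∑ μ ∈ eigFinset A, specProj A μ = 1 := by
  rw [eigFinset, dif_pos hA]
  simp only [specProj, matFun, dif_pos hA]
  rw [← Finset.sum_mul, ← Finset.mul_sum]
  have : ∑ μ ∈ Finset.image hA.eigenvalues Finset.univ,
      Matrix.diagonal (fun i => ((if hA.eigenvalues i = μ then 1 else 0 : ℝ) : ℂ)) = 1 := by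
    ext i j
    simp only [Matrix.sum_apply, Matrix.diagonal_apply, Matrix.one_apply]
    by_cases h : i = j
    · subst h
      simp only [eq_self_iff_true, if_true, apply_ite (Complex.ofReal),
        Complex.ofReal_one, Complex.ofReal_zero]
      rw [Finset.sum_ite_eq]
      simp
    · simp [h]
  rw [this, mul_one, (Matrix.mem_unitaryGroup_iff).mp (hA.eigenvectorUnitary).2]

end Aux

/-- **Key operator inequality.** `ρ_n ≤ v(σ_n) · E_{σ_n}(ρ_n)` in the Loewner order. -/
theorem key_operator_inequality {d : ℕ} (hd : 0 < d) (ρ σ : Matrix (Fin d) (Fin d) ℂ)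
    (hρ : IsDensity ρ) (hσ : IsDensity σ) (n : ℕ) (hn : 1 ≤ n) :
    ((numEig (tensorPow σ n) : ℂ) • pinch (tensorPow σ n) (tensorPow ρ n)
      - tensorPow ρ n).PosSemidef :=  by
  have hAH : (tensorPow σ n).IsHermitian := by
    unfold Matrix.IsHermitian
    rw [tensorPow_conjTranspose_aux, hσ.1.1.eq]
  obtain ⟨X, hXH, hXX⟩ : ∃ X : Matrix (Fin d) (Fin d) ℂ, Xᴴ = X ∧ X * X = ρ := by
    open scoped MatrixOrder in
    obtain ⟨X, hX, -, hXX⟩ := CFC.exists_sqrt_of_isSelfAdjoint_of_quasispectrumRestricts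
      hρ.1.isHermitian (QuasispectrumRestricts.nnreal_of_nonneg hρ.1.nonneg)
    exact ⟨X, hX.star_eq, hXX⟩
  set C : Matrix (Fin n → Fin d) (Fin n → Fin d) ℂ := tensorPow X n with hC
  have hCH : Cᴴ = C := by
    rw [hC, tensorPow_conjTranspose_aux, hXH]
  have hB : Cᴴ * C = tensorPow ρ n := by
    rw [hCH, hC, ← tensorPow_mul_aux, hXX]
  rw [numEig, pinch, ← hB]
  exact key_psd_aux (eigFinset (tensorPow σ n)) (specProj (tensorPow σ n)) C
    (fun μ _ => specProj_herm_aux hAH μ) (specProj_sum_aux hAH)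


end
end

section
/- (Hayashi's pinching inequality.) Let M = {M_i}_{i=1}^{v} be a PVM on a finite-dimensional complex Hilbert space, i.e., a family of v orthogonal projections with M_i M_j = 0 for i ≠ j and Σ_{i=1}^{v} M_i = I. Then for every density matrix ρ (positive semidefinite with trace 1), ρ ≤ v · Σ_{i=1}^{v} M_i ρ M_i in the Loewner order. -/
open Matrix Filter
open scoped ComplexOrder

noncomputable section

/-- **Hayashi's pinching inequality.** For a PVM `{M_i}_{i=1}^v` and a density matrix `ρ`,
`ρ ≤ v · Σ_i M_i ρ M_i` in the Loewner order. -/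
theorem hayashi_pinching_inequality {m : Type*} [Fintype m] [DecidableEq m]
    (v : ℕ) (M : Fin v → Matrix m m ℂ)
    (hherm : ∀ i, (M i).IsHermitian) (hproj : ∀ i, M i * M i = M i)
    (horth : ∀ i j, i ≠ j → M i * M j = 0) (hsum : ∑ i, M i = 1)
    (ρ : Matrix m m ℂ) (hρ : IsDensity ρ) :
    ((v : ℂ) • ∑ i, M i * ρ * M i - ρ).PosSemidef := by
  obtain ⟨B, hB⟩ : ∃ B : Matrix m m ℂ, ρ = Bᴴ * B := by
    open scoped MatrixOrder in
    obtain ⟨B, hB⟩ := CStarAlgebra.nonneg_iff_eq_star_mul_self.mp hρ.1.nonneg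
    exact ⟨B, hB⟩
  have hP : (∑ i, M i * ρ * M i).IsHermitian := by
    show _ᴴ = _
    rw [Matrix.conjTranspose_sum]
    refine Finset.sum_congr rfl fun i _ => ?_
    simp [Matrix.conjTranspose_mul, (hherm i).eq, hρ.1.1.eq, Matrix.mul_assoc]
  refine Matrix.posSemidef_iff_dotProduct_mulVec.mpr ⟨?_, ?_⟩
  · refine Matrix.IsHermitian.sub ?_ hρ.1.1
    show _ᴴ = _
    rw [Matrix.conjTranspose_smul, hP]
    simp
  · intro x
    set z : Fin v → EuclideanSpace ℂ m :=
      fun i => (WithLp.equiv 2 (m → ℂ)).symm (B *ᵥ (M i *ᵥ x)) with hz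
    have key : ∀ (N : Matrix m m ℂ), N.IsHermitian →
        star x ⬝ᵥ ((N * ρ * N) *ᵥ x) =
        star ((B * N) *ᵥ x) ⬝ᵥ ((B * N) *ᵥ x) := by
      intro N hN
      have : N * ρ * N = (B * N)ᴴ * (B * N) := by
        rw [hB, Matrix.conjTranspose_mul, hN.eq]
        simp only [Matrix.mul_assoc]
      rw [this, ← Matrix.mulVec_mulVec, Matrix.dotProduct_mulVec,
        Matrix.vecMul_conjTranspose, star_star]
    have h1 : ∀ i, star x ⬝ᵥ ((M i * ρ * M i) *ᵥ x) = ((‖z i‖ : ℝ) : ℂ) ^ 2 := by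
      intro i
      rw [key (M i) (hherm i)]
      have e1 : (B * M i) *ᵥ x = B *ᵥ (M i *ᵥ x) := (Matrix.mulVec_mulVec _ _ _).symm
      rw [e1, dotProduct_comm, ← EuclideanSpace.inner_toLp_toLp]
      exact_mod_cast inner_self_eq_norm_sq_to_K (𝕜 := ℂ) (z i)
    have hsumz : (WithLp.equiv 2 (m → ℂ)).symm (B *ᵥ x) = ∑ i, z i := by
      have : B *ᵥ x = ∑ i, B *ᵥ (M i *ᵥ x) := by
        calc B *ᵥ x = (B * ∑ i, M i) *ᵥ x := by rw [hsum, mul_one]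
          _ = (∑ i, B * M i) *ᵥ x := by rw [Finset.mul_sum]
          _ = ∑ i, (B * M i) *ᵥ x := map_sum (Matrix.mulVec.addMonoidHomLeft x) _ _
          _ = ∑ i, B *ᵥ (M i *ᵥ x) := by simp [Matrix.mulVec_mulVec]
      rw [this]
      exact map_sum (WithLp.linearEquiv 2 ℂ (m → ℂ)).symm _ _
    have h2 : star x ⬝ᵥ (ρ *ᵥ x) = ((‖∑ i, z i‖ : ℝ) : ℂ) ^ 2 := by
      have hρ1 : ρ = 1 * ρ * 1 := by simp
      rw [hρ1, key 1 Matrix.isHermitian_one]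
      have e1 : (B * 1) *ᵥ x = B *ᵥ x := by simp
      rw [e1, dotProduct_comm, ← EuclideanSpace.inner_toLp_toLp, ← WithLp.equiv_symm_apply, hsumz]
      exact_mod_cast inner_self_eq_norm_sq_to_K (𝕜 := ℂ) (∑ i, z i)
    have hsmv : (∑ i, M i * ρ * M i) *ᵥ x = ∑ i, (M i * ρ * M i) *ᵥ x :=
      map_sum (Matrix.mulVec.addMonoidHomLeft x) _ _
    have expand : star x ⬝ᵥ (((v : ℂ) • ∑ i, M i * ρ * M i - ρ) *ᵥ x) =
        (v : ℂ) * (∑ i, ((‖z i‖ : ℝ) : ℂ) ^ 2) - ((‖∑ i, z i‖ : ℝ) : ℂ) ^ 2 := by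
      have hds : star x ⬝ᵥ (∑ i, (M i * ρ * M i) *ᵥ x) =
          ∑ i, star x ⬝ᵥ ((M i * ρ * M i) *ᵥ x) := by
        simp only [dotProduct, Finset.sum_apply, Finset.mul_sum]
        exact Finset.sum_comm
      rw [Matrix.sub_mulVec, dotProduct_sub, Matrix.smul_mulVec,
        dotProduct_smul, hsmv, hds, h2]
      simp_rw [h1]
      rw [smul_eq_mul]
    rw [expand]
    have hreal : ‖∑ i, z i‖ ^ 2 ≤ (v : ℝ) * ∑ i, ‖z i‖ ^ 2 := by
      calc ‖∑ i, z i‖ ^ 2 ≤ (∑ i, ‖z i‖) ^ 2 :=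
            pow_le_pow_left₀ (norm_nonneg _) (norm_sum_le Finset.univ z) 2
        _ ≤ (Finset.univ : Finset (Fin v)).card * ∑ i, ‖z i‖ ^ 2 :=
            sq_sum_le_card_mul_sum_sq
        _ = (v : ℝ) * ∑ i, ‖z i‖ ^ 2 := by simp
    calc (0 : ℂ) = ((0 : ℝ) : ℂ) := by norm_num
      _ ≤ (((v : ℝ) * ∑ i, ‖z i‖ ^ 2 - ‖∑ i, z i‖ ^ 2 : ℝ) : ℂ) :=
          Complex.real_le_real.mpr (by linarith)
      _ = (v : ℂ) * (∑ i, ((‖z i‖ : ℝ) : ℂ) ^ 2) - ((‖∑ i, z i‖ : ℝ) : ℂ) ^ 2 := by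
          push_cast; ring


end
end

section
/- (Exponential bound on the second-kind error.) For every real a and every n ≥ 1, the test S̄_n(a) = {E_{σ_n}(ρ_n) − e^{na} σ_n > 0} satisfies β_n(S̄_n(a)) = Tr[σ_n S̄_n(a)] ≤ e^{−na}. -/
open Matrix Filter
open scoped ComplexOrder

noncomputable section

section Aux

variable {m : Type*} [Fintype m] [DecidableEq m]

lemma matFun_eq {A : Matrix m m ℂ} (hA : A.IsHermitian) (f : ℝ → ℝ) :
    matFun f A = (hA.eigenvectorUnitary : Matrix m m ℂ) *
      Matrix.diagonal (fun i => (f (hA.eigenvalues i) : ℂ)) *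
      star (hA.eigenvectorUnitary : Matrix m m ℂ) :=
  dif_pos hA

lemma matFun_mul {A : Matrix m m ℂ} (hA : A.IsHermitian) (f g : ℝ → ℝ) :
    matFun f A * matFun g A = matFun (fun x => f x * g x) A := by
  have hU : star (hA.eigenvectorUnitary : Matrix m m ℂ) *
      (hA.eigenvectorUnitary : Matrix m m ℂ) = 1 :=
    Matrix.mem_unitaryGroup_iff'.mp hA.eigenvectorUnitary.2
  rw [matFun_eq hA, matFun_eq hA, matFun_eq hA]
  simp only [Matrix.mul_assoc]
  rw [← Matrix.mul_assoc (star (hA.eigenvectorUnitary : Matrix m m ℂ)), hU, Matrix.one_mul,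
    ← Matrix.mul_assoc (Matrix.diagonal _), Matrix.diagonal_mul_diagonal]
  push_cast
  rfl

lemma matFun_id {A : Matrix m m ℂ} (hA : A.IsHermitian) :
    matFun (fun x => x) A = A := by
  rw [matFun_eq hA]
  conv_rhs => rw [hA.spectral_theorem]
  rfl

lemma matFun_one {A : Matrix m m ℂ} (hA : A.IsHermitian) :
    matFun (fun _ => 1) A = 1 := by
  have hU : (hA.eigenvectorUnitary : Matrix m m ℂ) *
      star (hA.eigenvectorUnitary : Matrix m m ℂ) = 1 :=
    Matrix.mem_unitaryGroup_iff.mp hA.eigenvectorUnitary.2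
  rw [matFun_eq hA]
  simp [hU]

lemma matFun_sub {A : Matrix m m ℂ} (hA : A.IsHermitian) (f g : ℝ → ℝ) :
    matFun f A - matFun g A = matFun (fun x => f x - g x) A := by
  rw [matFun_eq hA, matFun_eq hA, matFun_eq hA, ← Matrix.sub_mul, ← Matrix.mul_sub,
    Matrix.diagonal_sub]
  push_cast
  rfl

lemma matFun_trace {A : Matrix m m ℂ} (hA : A.IsHermitian) (f : ℝ → ℝ) :
    (matFun f A).trace = ∑ i, (f (hA.eigenvalues i) : ℂ) := by
  have hU : star (hA.eigenvectorUnitary : Matrix m m ℂ) *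
      (hA.eigenvectorUnitary : Matrix m m ℂ) = 1 :=
    Matrix.mem_unitaryGroup_iff'.mp hA.eigenvectorUnitary.2
  rw [matFun_eq hA, Matrix.trace_mul_cycle, hU, Matrix.one_mul, Matrix.trace_diagonal]

lemma matFun_posSemidef {A : Matrix m m ℂ} (hA : A.IsHermitian) {f : ℝ → ℝ}
    (hf : ∀ x, 0 ≤ f x) : (matFun f A).PosSemidef := by
  rw [matFun_eq hA]
  have hD : (Matrix.diagonal (fun i => (f (hA.eigenvalues i) : ℂ))).PosSemidef := by
    rw [Matrix.posSemidef_diagonal_iff]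
    intro i
    exact_mod_cast Complex.zero_le_real.mpr (hf _)
  simpa [Matrix.star_eq_conjTranspose] using
    hD.mul_mul_conjTranspose_same (hA.eigenvectorUnitary : Matrix m m ℂ)

lemma matFun_isHermitian {A : Matrix m m ℂ} (hA : A.IsHermitian) (f : ℝ → ℝ) :
    (matFun f A).IsHermitian := by
  rw [matFun_eq hA]
  have hD : (Matrix.diagonal (fun i => (f (hA.eigenvalues i) : ℂ))).IsHermitian := by
    refine Matrix.isHermitian_diagonal_of_self_adjoint _ ?_
    ext i
    simp [Pi.star_apply, Complex.conj_ofReal]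
  simpa [Matrix.star_eq_conjTranspose] using
    Matrix.isHermitian_mul_mul_conjTranspose (hA.eigenvectorUnitary : Matrix m m ℂ) hD

lemma sum_specProj {A : Matrix m m ℂ} (hA : A.IsHermitian) :
    ∑ μ ∈ eigFinset A, specProj A μ = 1 := by
  have hU : (hA.eigenvectorUnitary : Matrix m m ℂ) *
      star (hA.eigenvectorUnitary : Matrix m m ℂ) = 1 :=
    Matrix.mem_unitaryGroup_iff.mp hA.eigenvectorUnitary.2
  unfold eigFinset specProj
  rw [dif_pos hA]
  have hform : ∀ μ : ℝ, matFun (fun x => if x = μ then 1 else 0) A =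
      (hA.eigenvectorUnitary : Matrix m m ℂ) *
        Matrix.diagonal (fun i => (if hA.eigenvalues i = μ then (1:ℂ) else 0)) *
        star (hA.eigenvectorUnitary : Matrix m m ℂ) := by
    intro μ
    rw [matFun_eq hA]
    simp only [apply_ite (fun (x : ℝ) => (x : ℂ)), Complex.ofReal_one, Complex.ofReal_zero]
  simp only [hform]
  rw [← Finset.sum_mul, ← Matrix.mul_sum]
  have hsum : ∑ μ ∈ Finset.image hA.eigenvalues Finset.univ,
      Matrix.diagonal (fun i => (if hA.eigenvalues i = μ then (1:ℂ) else 0))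
      = Matrix.diagonal (fun i => ∑ μ ∈ Finset.image hA.eigenvalues Finset.univ,
          (if hA.eigenvalues i = μ then (1:ℂ) else 0)) := by
    ext i j
    by_cases h : i = j <;> simp [Matrix.sum_apply, Matrix.diagonal_apply, h]
  rw [hsum]
  have hone : ∀ i, ∑ μ ∈ Finset.image hA.eigenvalues Finset.univ,
      (if hA.eigenvalues i = μ then (1:ℂ) else 0) = 1 := by
    intro i
    rw [Finset.sum_ite_eq]
    simp [Finset.mem_image_of_mem]
  simp only [hone, Matrix.diagonal_one, Matrix.mul_one, hU]

lemma specProj_idem {A : Matrix m m ℂ} (hA : A.IsHermitian) (μ : ℝ) :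
    specProj A μ * specProj A μ = specProj A μ := by
  unfold specProj
  rw [matFun_mul hA]
  have h : ∀ x : ℝ, ((if x = μ then (1:ℝ) else 0) * if x = μ then 1 else 0)
      = (if x = μ then (1:ℝ) else 0) := by
    intro x; split_ifs <;> ring
  simp only [h]

lemma pinch_posSemidef {A B : Matrix m m ℂ} (hA : A.IsHermitian) (hB : B.PosSemidef) :
    (pinch A B).PosSemidef := by
  unfold pinch
  refine Finset.sum_induction _ _ (fun a b ha hb => ha.add hb) Matrix.PosSemidef.zero ?_
  intro μ _
  have hE : (specProj A μ).IsHermitian := matFun_isHermitian hA _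
  have := hB.mul_mul_conjTranspose_same (specProj A μ)
  rwa [hE.eq] at this

lemma pinch_trace {A B : Matrix m m ℂ} (hA : A.IsHermitian) :
    (pinch A B).trace = B.trace := by
  unfold pinch
  rw [Matrix.trace_sum]
  have : ∀ μ ∈ eigFinset A, (specProj A μ * B * specProj A μ).trace
      = (specProj A μ * B).trace := by
    intro μ _
    rw [Matrix.trace_mul_cycle, specProj_idem hA]
  rw [Finset.sum_congr rfl this, ← Matrix.trace_sum, ← Finset.sum_mul, sum_specProj hA,
    Matrix.one_mul]

end Aux

section TensorAux

variable {d : ℕ}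

lemma tensorPow_mul (A B : Matrix (Fin d) (Fin d) ℂ) (n : ℕ) :
    tensorPow A n * tensorPow B n = tensorPow (A * B) n := by
  ext x y
  simp only [tensorPow, Matrix.mul_apply]
  rw [Finset.prod_univ_sum, Fintype.piFinset_univ]
  exact Finset.sum_congr rfl fun z _ => (Finset.prod_mul_distrib).symm

lemma tensorPow_conjTranspose (A : Matrix (Fin d) (Fin d) ℂ) (n : ℕ) :
    (tensorPow A n)ᴴ = tensorPow Aᴴ n := by
  ext x y
  simp only [tensorPow, Matrix.conjTranspose_apply]
  rw [star_prod]

lemma tensorPow_trace (A : Matrix (Fin d) (Fin d) ℂ) (n : ℕ) :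
    (tensorPow A n).trace = A.trace ^ n := by
  unfold Matrix.trace tensorPow Matrix.diag
  have h : (∑ j, A j j) ^ n = ∏ _i : Fin n, ∑ j, A j j := by
    rw [Finset.prod_const, Finset.card_univ, Fintype.card_fin]
  rw [h, Finset.prod_univ_sum, Fintype.piFinset_univ]

lemma tensorPow_posSemidef {A : Matrix (Fin d) (Fin d) ℂ} (hA : A.PosSemidef) (n : ℕ) :
    (tensorPow A n).PosSemidef := by
  obtain ⟨B, hB⟩ : ∃ B : Matrix (Fin d) (Fin d) ℂ, A = Bᴴ * B := by
    open scoped MatrixOrder in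
    exact CStarAlgebra.nonneg_iff_eq_star_mul_self.mp hA.nonneg
  rw [hB, ← tensorPow_mul, ← tensorPow_conjTranspose]
  exact Matrix.posSemidef_conjTranspose_mul_self _

end TensorAux

section TraceAux

variable {m : Type*} [Fintype m] [DecidableEq m]

lemma trace_conjTranspose_mul_self_nonneg' (X : Matrix m m ℂ) :
    0 ≤ (Xᴴ * X).trace := by
  unfold Matrix.trace Matrix.diag
  refine Finset.sum_nonneg fun i _ => ?_
  rw [Matrix.mul_apply]
  refine Finset.sum_nonneg fun j _ => ?_
  simpa [Matrix.conjTranspose_apply] using star_mul_self_nonneg (X j i)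

lemma trace_mul_psd_nonneg {A B : Matrix m m ℂ} (hA : A.PosSemidef) (hB : B.PosSemidef) :
    0 ≤ (A * B).trace := by
  obtain ⟨C, rfl⟩ : ∃ C : Matrix m m ℂ, A = Cᴴ * C := by
    open scoped MatrixOrder in
    exact CStarAlgebra.nonneg_iff_eq_star_mul_self.mp hA.nonneg
  obtain ⟨D, rfl⟩ : ∃ D : Matrix m m ℂ, B = Dᴴ * D := by
    open scoped MatrixOrder in
    exact CStarAlgebra.nonneg_iff_eq_star_mul_self.mp hB.nonneg
  have h : (Cᴴ * C) * (Dᴴ * D) = Cᴴ * (C * Dᴴ * D) := by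
    simp only [Matrix.mul_assoc]
  rw [h, Matrix.trace_mul_comm]
  have h2 : (D * Cᴴ)ᴴ * (D * Cᴴ) = C * Dᴴ * D * Cᴴ := by
    simp only [Matrix.conjTranspose_mul, Matrix.conjTranspose_conjTranspose, Matrix.mul_assoc]
  have := trace_conjTranspose_mul_self_nonneg' (D * Cᴴ)
  rwa [h2] at this

lemma re_nonneg_of_nonneg {z : ℂ} (hz : 0 ≤ z) : 0 ≤ z.re := by
  rw [Complex.le_def] at hz
  simpa using hz.1

end TraceAux

section PosProjAux

variable {m : Type*} [Fintype m] [DecidableEq m]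

lemma one_sub_posProj_posSemidef {X : Matrix m m ℂ} (hX : X.IsHermitian) :
    (1 - posProj X).PosSemidef := by
  unfold posProj
  rw [← matFun_one hX, matFun_sub hX]
  refine matFun_posSemidef hX fun x => ?_
  split_ifs <;> norm_num

lemma trace_mul_posProj_re_nonneg {X : Matrix m m ℂ} (hX : X.IsHermitian) :
    0 ≤ ((X * posProj X).trace).re := by
  have h1 : X * posProj X = matFun (fun x => x * (if 0 < x then 1 else 0)) X := by
    unfold posProj
    nth_rewrite 1 [← matFun_id hX]
    rw [matFun_mul hX]
  rw [h1, matFun_trace hX, ← Complex.ofReal_sum, Complex.ofReal_re]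
  refine Finset.sum_nonneg fun i _ => ?_
  split_ifs with h
  · rw [mul_one]; exact le_of_lt h
  · rw [mul_zero]

end PosProjAux

/-- **Exponential bound on the second-kind error** of the test
`S̄_n(a) = {E_{σ_n}(ρ_n) − e^{na} σ_n > 0}`: `β_n(S̄_n(a)) ≤ e^{−na}`. -/
theorem beta_exponential_bound {d : ℕ} (hd : 0 < d) (ρ σ : Matrix (Fin d) (Fin d) ℂ)
    (hρ : IsDensity ρ) (hσ : IsDensity σ) (a : ℝ) (n : ℕ) (hn : 1 ≤ n) :
    betaErr σ n (posProj (pinch (tensorPow σ n) (tensorPow ρ n)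
        - (Real.exp (n * a) : ℂ) • tensorPow σ n))
      ≤ Real.exp (-((n : ℝ) * a)) := by
  classical
  set σn := tensorPow σ n with hσn_def
  set ρn := tensorPow ρ n with hρn_def
  have hσnP : σn.PosSemidef := tensorPow_posSemidef hσ.1 n
  have hρnP : ρn.PosSemidef := tensorPow_posSemidef hρ.1 n
  have hσnH : σn.IsHermitian := hσnP.1
  set c : ℂ := (Real.exp ((n : ℝ) * a) : ℂ) with hc
  set P := pinch σn ρn with hP_def
  have hPpsd : P.PosSemidef := pinch_posSemidef hσnH hρnP
  have hPtr : P.trace = 1 := by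
    rw [hP_def, pinch_trace hσnH, hρn_def, tensorPow_trace, hρ.2, one_pow]
  set X := P - c • σn with hX_def
  have hcσH : (c • σn).IsHermitian := by
    unfold Matrix.IsHermitian
    rw [Matrix.conjTranspose_smul, hσnH.eq]
    congr 1
    simp only [hc, Complex.star_def, Complex.conj_ofReal]
  have hXH : X.IsHermitian := hPpsd.1.sub hcσH
  set S := posProj X with hS_def
  have hkey : Real.exp ((n : ℝ) * a) * ((σn * S).trace).re ≤ 1 := by
    have hdecomp : ((c • σn) * S).trace = (P * S).trace - (X * S).trace := by
      rw [← Matrix.trace_sub, ← Matrix.sub_mul]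
      congr 2
      rw [hX_def, sub_sub_cancel]
    have hPS : ((P * S).trace).re ≤ 1 := by
      have h2 : (P * S).trace = P.trace - (P * (1 - S)).trace := by
        rw [Matrix.mul_sub, Matrix.mul_one, Matrix.trace_sub]
        ring
      have h3 : 0 ≤ ((P * (1 - S)).trace).re :=
        re_nonneg_of_nonneg (trace_mul_psd_nonneg hPpsd (one_sub_posProj_posSemidef hXH))
      rw [h2, Complex.sub_re, hPtr]
      simp only [Complex.one_re]
      linarith
    have hXS : 0 ≤ ((X * S).trace).re := trace_mul_posProj_re_nonneg hXH
    have hsm : ((c • σn) * S).trace.re = Real.exp ((n : ℝ) * a) * ((σn * S).trace).re := by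
      rw [smul_mul_assoc, Matrix.trace_smul, hc, smul_eq_mul, Complex.re_ofReal_mul]
    rw [← hsm, hdecomp, Complex.sub_re]
    linarith
  have hgoal : betaErr σ n S = ((σn * S).trace).re := rfl
  rw [hgoal, Real.exp_neg, ← one_div, le_div_iff₀ (Real.exp_pos _)]
  linarith

end
end

section
/- (Properties of the exponent function ψ.) Define ψ(s) = −log Tr[ρ σ^{s/2} ρ^{−s} σ^{s/2}] for real s. Then ψ(0) = 0 and ψ is differentiable at 0 with ψ'(0) = D(ρ‖σ). Consequently, for every real a < D(ρ‖σ) there exists s with 0 ≤ s ≤ 1 such that a·s − ψ(s) < 0. -/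
open Matrix Filter
open scoped ComplexOrder

noncomputable section

namespace PsiAux

attribute [local instance] Matrix.frobeniusSeminormedAddCommGroup
  Matrix.frobeniusNormedAddCommGroup Matrix.frobeniusNormedSpace
  Matrix.frobeniusNormedRing Matrix.frobeniusNormedAlgebra

variable {m : Type*} [Fintype m] [DecidableEq m]

/-- rank-one spectral pieces -/
def Q (A : Matrix m m ℂ) (hA : A.IsHermitian) (i : m) : Matrix m m ℂ :=
  (hA.eigenvectorUnitary : Matrix m m ℂ) * Matrix.single i i 1 *
    star (hA.eigenvectorUnitary : Matrix m m ℂ)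

lemma diagonal_eq_sum (d : m → ℂ) :
    Matrix.diagonal d = ∑ i, d i • Matrix.single i i (1 : ℂ) := by
  ext a b
  simp only [Matrix.sum_apply, Matrix.smul_apply, Matrix.single, Matrix.of_apply,
    Matrix.diagonal_apply, smul_eq_mul, mul_ite, mul_one, mul_zero]
  by_cases h : a = b
  · subst h; simp
  · have : ∀ x : m, (if x = a ∧ x = b then d x else 0) = 0 := by
      intro x
      rw [if_neg]
      rintro ⟨rfl, rfl⟩; exact h rfl
    simp only [this, Finset.sum_const_zero]
    exact if_neg h

lemma matFun_eq_sum (f : ℝ → ℝ) (A : Matrix m m ℂ) (hA : A.IsHermitian) :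
    matFun f A = ∑ i, f (hA.eigenvalues i) • Q A hA i := by
  rw [matFun, dif_pos hA, diagonal_eq_sum]
  rw [Finset.mul_sum, Finset.sum_mul]
  refine Finset.sum_congr rfl fun i _ => ?_
  rw [mul_smul_comm, smul_mul_assoc, Q]
  ext a b
  simp [Complex.real_smul]

lemma sum_Q (A : Matrix m m ℂ) (hA : A.IsHermitian) : ∑ i, Q A hA i = 1 := by
  have h1 : ∑ i, Matrix.single i i (1 : ℂ) = (1 : Matrix m m ℂ) := by
    have := (diagonal_eq_sum (m := m) fun _ => (1:ℂ)).symm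
    simpa using this
  calc ∑ i, Q A hA i
      = (hA.eigenvectorUnitary : Matrix m m ℂ) * (∑ i, Matrix.single i i (1:ℂ)) *
        star (hA.eigenvectorUnitary : Matrix m m ℂ) := by
        rw [Finset.mul_sum, Finset.sum_mul]; rfl
    _ = 1 := by
        rw [h1, mul_one, Matrix.mem_unitaryGroup_iff.mp hA.eigenvectorUnitary.2]

lemma matRPow_zero (A : Matrix m m ℂ) (hA : A.IsHermitian) : matRPow A 0 = 1 := by
  rw [matRPow, matFun_eq_sum _ _ hA]
  simp only [Real.rpow_zero, one_smul]
  exact sum_Q A hA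

lemma hasDerivAt_matRPow (A : Matrix m m ℂ) (hA : A.PosDef) :
    HasDerivAt (fun t : ℝ => matRPow A t) (matLog A) 0 := by
  have hfun : (fun t : ℝ => matRPow A t)
      = fun t => ∑ i, (hA.1.eigenvalues i ^ t) • Q A hA.1 i := by
    funext t; exact matFun_eq_sum _ _ hA.1
  rw [hfun, matLog, matFun_eq_sum _ _ hA.1]
  refine HasDerivAt.fun_sum fun i _ => ?_
  have hpos := hA.eigenvalues_pos i
  have h2 : HasDerivAt (fun t : ℝ => hA.1.eigenvalues i ^ t)
      (Real.log (hA.1.eigenvalues i)) 0 := by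
    simpa [Real.rpow_zero] using (Real.hasStrictDerivAt_const_rpow hpos 0).hasDerivAt
  exact h2.smul_const _

lemma hasDerivAt_half (A : Matrix m m ℂ) (hA : A.PosDef) :
    HasDerivAt (fun s : ℝ => matRPow A (s / 2)) ((2⁻¹ : ℝ) • matLog A) 0 := by
  have hg : HasDerivAt (fun t : ℝ => matRPow A t) (matLog A) ((0 : ℝ) / 2) := by
    rw [zero_div]; exact hasDerivAt_matRPow A hA
  have hh : HasDerivAt (fun s : ℝ => s / 2) (2⁻¹ : ℝ) 0 := by
    simpa using (hasDerivAt_id (0 : ℝ)).div_const 2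
  exact hg.scomp 0 hh

lemma hasDerivAt_negpow (A : Matrix m m ℂ) (hA : A.PosDef) :
    HasDerivAt (fun s : ℝ => matRPow A (-s)) ((-1 : ℝ) • matLog A) 0 := by
  have hg : HasDerivAt (fun t : ℝ => matRPow A t) (matLog A) (-(0 : ℝ)) := by
    rw [neg_zero]; exact hasDerivAt_matRPow A hA
  exact hg.scomp 0 (hasDerivAt_neg 0)

lemma hasDerivAt_traceRe {d : ℕ} (ρ σ : Matrix (Fin d) (Fin d) ℂ)
    (hρpd : ρ.PosDef) (hσpd : σ.PosDef) :
    HasDerivAt (fun s : ℝ =>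
        ((ρ * matRPow σ (s / 2) * matRPow ρ (-s) * matRPow σ (s / 2)).trace.re))
      (-(relEnt ρ σ)) 0 := by
  have hAσ := hasDerivAt_half σ hσpd
  have hBρ := hasDerivAt_negpow ρ hρpd
  have hM := ((hAσ.const_mul ρ).mul hBρ).mul hAσ
  -- simplify values at 0
  have hσ0 : matRPow σ ((0:ℝ) / 2) = 1 := by rw [zero_div]; exact matRPow_zero σ hσpd.1
  have hρ0 : matRPow ρ (-(0:ℝ)) = 1 := by rw [neg_zero]; exact matRPow_zero ρ hρpd.1
  simp only [Pi.mul_apply] at hM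
  rw [hσ0, hρ0] at hM
  have hDeq : (ρ * ((2⁻¹:ℝ) • matLog σ) * 1 + ρ * 1 * ((-1:ℝ) • matLog ρ)) * 1
      + ρ * 1 * 1 * ((2⁻¹:ℝ) • matLog σ)
      = ρ * matLog σ - ρ * matLog ρ := by
    simp only [mul_one, mul_smul_comm]
    module
  rw [hDeq] at hM
  -- push through trace and re
  let L : Matrix (Fin d) (Fin d) ℂ →L[ℝ] ℝ :=
    Complex.reCLM.comp
      (((Matrix.traceLinearMap (Fin d) ℂ ℂ).toContinuousLinearMap).restrictScalars ℝ)
  have hF := L.hasFDerivAt.comp_hasDerivAt 0 hM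
  have hfun : (fun s : ℝ => L (ρ * matRPow σ (s / 2) * matRPow ρ (-s) * matRPow σ (s / 2)))
      = fun s : ℝ =>
        ((ρ * matRPow σ (s / 2) * matRPow ρ (-s) * matRPow σ (s / 2)).trace.re) := by
    funext s; simp [L]
  have hval : L (ρ * matLog σ - ρ * matLog ρ) = -(relEnt ρ σ) := by
    have hL : L (ρ * matLog σ - ρ * matLog ρ)
        = ((ρ * matLog σ - ρ * matLog ρ).trace).re := by simp [L]
    rw [hL, relEnt, Matrix.trace_sub, Complex.sub_re, mul_sub, Matrix.trace_sub, Complex.sub_re]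
    ring
  have hF' : HasDerivAt
      (fun s : ℝ => L (ρ * matRPow σ (s / 2) * matRPow ρ (-s) * matRPow σ (s / 2)))
      (L (ρ * matLog σ - ρ * matLog ρ)) 0 := hF
  rw [hfun, hval] at hF'
  exact hF'

end PsiAux

/-- **Properties of the exponent function** `ψ(s) = −log Tr[ρ σ^{s/2} ρ^{−s} σ^{s/2}]`:
`ψ(0) = 0`, `ψ'(0) = D(ρ‖σ)`, and consequently for every `a < D(ρ‖σ)` there is
`s ∈ [0,1]` with `a·s − ψ(s) < 0`. -/
theorem psi_properties {d : ℕ} (hd : 0 < d) (ρ σ : Matrix (Fin d) (Fin d) ℂ)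
    (hρ : IsDensity ρ) (hσ : IsDensity σ) (hρpd : ρ.PosDef) (hσpd : σ.PosDef) :
    (fun s : ℝ => -Real.log
        ((ρ * matRPow σ (s / 2) * matRPow ρ (-s) * matRPow σ (s / 2)).trace.re)) 0 = 0
    ∧ HasDerivAt (fun s : ℝ => -Real.log
        ((ρ * matRPow σ (s / 2) * matRPow ρ (-s) * matRPow σ (s / 2)).trace.re))
        (relEnt ρ σ) 0
    ∧ ∀ a : ℝ, a < relEnt ρ σ → ∃ s : ℝ, 0 ≤ s ∧ s ≤ 1 ∧
        a * s - (-Real.log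
          ((ρ * matRPow σ (s / 2) * matRPow ρ (-s) * matRPow σ (s / 2)).trace.re)) < 0 := by
  classical
  have hσ0 : matRPow σ ((0:ℝ) / 2) = 1 := by
    rw [zero_div]; exact PsiAux.matRPow_zero σ hσpd.1
  have hρ0 : matRPow ρ (-(0:ℝ)) = 1 := by
    rw [neg_zero]; exact PsiAux.matRPow_zero ρ hρpd.1
  set f : ℝ → ℝ := fun s : ℝ =>
    ((ρ * matRPow σ (s / 2) * matRPow ρ (-s) * matRPow σ (s / 2)).trace.re) with hfdef
  have hf0 : f 0 = 1 := by
    simp only [hfdef, hσ0, hρ0, mul_one]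
    rw [hρ.2]; simp
  have hf : HasDerivAt f (-(relEnt ρ σ)) 0 := PsiAux.hasDerivAt_traceRe ρ σ hρpd hσpd
  have hψ : HasDerivAt (fun s : ℝ => -Real.log (f s)) (relEnt ρ σ) 0 := by
    have hlog : HasDerivAt Real.log ((f 0)⁻¹) (f 0) :=
      Real.hasDerivAt_log (by rw [hf0]; norm_num)
    have := (hlog.comp 0 hf).neg
    rw [hf0] at this
    simpa [Function.comp_def, Pi.neg_def] using this
  have hpsi0 : -Real.log (f 0) = 0 := by rw [hf0, Real.log_one, neg_zero]
  refine ⟨by simpa [hfdef] using hpsi0, hψ, ?_⟩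
  intro a ha
  set g : ℝ → ℝ := fun s => a * s - -Real.log (f s) with hgdef
  have hg : HasDerivAt g (a - relEnt ρ σ) 0 := by
    have h1 : HasDerivAt (fun s : ℝ => a * s) a 0 := by
      simpa using (hasDerivAt_id (0:ℝ)).const_mul a
    exact h1.sub hψ
  have hg0 : g 0 = 0 := by
    show a * 0 - -Real.log (f 0) = 0
    rw [hf0]; simp
  have hslope : Filter.Tendsto (slope g 0) (nhdsWithin 0 {x | x ≠ 0}) (nhds (a - relEnt ρ σ)) :=
    hasDerivAt_iff_tendsto_slope.mp hg
  have h2 : Filter.Tendsto (slope g 0) (nhdsWithin 0 (Set.Ioi 0)) (nhds (a - relEnt ρ σ)) :=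
    hslope.mono_left (nhdsWithin_mono 0 (fun x hx => ne_of_gt hx))
  have h3 : ∀ᶠ s in nhdsWithin 0 (Set.Ioi 0), slope g 0 s < 0 :=
    h2.eventually_lt_const (by linarith)
  have h4 : ∀ᶠ s in nhdsWithin 0 (Set.Ioi 0), s ∈ Set.Ioc (0:ℝ) 1 :=
    Ioc_mem_nhdsGT_of_mem ⟨le_refl 0, zero_lt_one⟩
  obtain ⟨s, hs1, hs2⟩ := (h3.and h4).exists
  refine ⟨s, le_of_lt hs2.1, hs2.2, ?_⟩
  have hspos : (0:ℝ) < s := hs2.1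
  have hslope_eq : slope g 0 s = g s / s := by
    rw [slope_def_field, hg0, sub_zero, sub_zero]
  rw [hslope_eq] at hs1
  have : g s < 0 := by
    have := mul_neg_of_neg_of_pos hs1 hspos
    rwa [div_mul_cancel₀ _ (ne_of_gt hspos)] at this
  exact this


end
end
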